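/- In the two-dimensional yarmulke Morse geometry, write Z = √(ζ−1). Let 0 < φ_s ≤ π, r_s > 0 and a be reals with r_s e^{φ_s/Z} < a < ε, let s = r_s(cos φ_s, sin φ_s) and q = (a, 0). Then the curve γ : [0,1] → ℝ², γ(t) = ρ(t)(cos φ(t), sin φ(t)) with φ(t) = (1−t)φ_s and ρ(t) = [t·a + (1−t)·r_s e^{φ_s/Z}] e^{−φ(t)/Z}, lies entirely in N, runs from γ(0) = s to γ(1) = q, and is future-directed timelike (g_{γ(t)}(γ'(t),γ'(t)) < 0 and γ(t)·γ'(t) > 0 for all t). In particular s ≪ q. -/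

import Mathlib

noncomputable section

open Set

/-- The punctured disc `N = {p : 0 < |p| < ε}` (Euclidean norm). -/
def NY (ε : ℝ) : Set (ℝ × ℝ) :=
  {p | 0 < p.1 ^ 2 + p.2 ^ 2 ∧ p.1 ^ 2 + p.2 ^ 2 < ε ^ 2}

/-- Euclidean dot product on ℝ². -/
def dot2 (a b : ℝ × ℝ) : ℝ := a.1 * b.1 + a.2 * b.2

/-- Planar cross product `p × w = p₁w₂ − p₂w₁`. -/
def cross2 (a b : ℝ × ℝ) : ℝ := a.1 * b.2 - a.2 * b.1

/-- The yarmulke Morse metric (quadratic form) built from `f(p) = |p|²`: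
`g_p(w,w) = 4|p|²|w|² − 4ζ(p·w)²`. -/
def gY (ζ : ℝ) (p w : ℝ × ℝ) : ℝ :=
  4 * dot2 p p * dot2 w w - 4 * ζ * dot2 p w ^ 2

/-- A future-directed timelike curve: a C¹ curve in `N` with everywhere timelike
tangent satisfying the future-pointing condition `γ(t)·γ'(t) > 0`. -/
def TimelikeY (ζ ε : ℝ) (γ γ' : ℝ → ℝ × ℝ) : Prop :=
  (∀ t ∈ Icc (0 : ℝ) 1, HasDerivAt γ (γ' t) t) ∧
  ContinuousOn γ' (Icc (0 : ℝ) 1) ∧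
  (∀ t ∈ Icc (0 : ℝ) 1, γ t ∈ NY ε) ∧
  (∀ t ∈ Icc (0 : ℝ) 1, gY ζ (γ t) (γ' t) < 0) ∧
  (∀ t ∈ Icc (0 : ℝ) 1, 0 < dot2 (γ t) (γ' t))

/-- The chronology relation `q ≪ p`. -/
def chronY (ζ ε : ℝ) (q p : ℝ × ℝ) : Prop :=
  ∃ γ γ', TimelikeY ζ ε γ γ' ∧ γ 0 = q ∧ γ 1 = p

def IplusY (ζ ε : ℝ) (q : ℝ × ℝ) : Set (ℝ × ℝ) := {p ∈ NY ε | chronY ζ ε q p}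

def IminusY (ζ ε : ℝ) (q : ℝ × ℝ) : Set (ℝ × ℝ) := {p ∈ NY ε | chronY ζ ε p q}

/-- The angle `φ_p ∈ (−π, π]` of a point of the plane. -/
def ang (p : ℝ × ℝ) : ℝ := Complex.arg ((p.1 : ℂ) + (p.2 : ℂ) * Complex.I)

set_option maxHeartbeats 1600000 in
/-- the explicit interpolating curve
`γ(t) = ρ(t)(cos φ(t), sin φ(t))`, `φ(t) = (1−t)φ_s`,
`ρ(t) = [ta + (1−t)r_s e^{φ_s/Z}]e^{−φ(t)/Z}`, lies in `N`, runs from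
`s = r_s(cos φ_s, sin φ_s)` to `q = (a, 0)`, and is future-directed timelike;
in particular `s ≪ q`. -/
theorem stmt6 (ζ ε : ℝ) (hζ : 1 < ζ) (hε : 0 < ε) (φs rs a : ℝ)
    (hφ0 : 0 < φs) (hφπ : φs ≤ Real.pi) (hrs : 0 < rs)
    (hra : rs * Real.exp (φs / Real.sqrt (ζ - 1)) < a) (haε : a < ε) :
    let Z := Real.sqrt (ζ - 1)
    let φ : ℝ → ℝ := fun t => (1 - t) * φs
    let ρ : ℝ → ℝ := fun t =>
      (t * a + (1 - t) * (rs * Real.exp (φs / Z))) * Real.exp (-φ t / Z)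
    let γ : ℝ → ℝ × ℝ := fun t => (ρ t * Real.cos (φ t), ρ t * Real.sin (φ t))
    (∀ t ∈ Icc (0 : ℝ) 1, γ t ∈ NY ε) ∧
    γ 0 = (rs * Real.cos φs, rs * Real.sin φs) ∧
    γ 1 = (a, 0) ∧
    (∀ t ∈ Icc (0 : ℝ) 1,
      DifferentiableAt ℝ γ t ∧
      gY ζ (γ t) (deriv γ t) < 0 ∧
      0 < dot2 (γ t) (deriv γ t)) ∧
    chronY ζ ε (rs * Real.cos φs, rs * Real.sin φs) (a, 0) := by
  intro Z φ ρ γ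
  have hZ1 : (0:ℝ) < ζ - 1 := by linarith
  have hZ : 0 < Z := Real.sqrt_pos.mpr hZ1
  have hZ2 : Z ^ 2 = ζ - 1 := Real.sq_sqrt hZ1.le
  have hφ : ∀ t, φ t = (1 - t) * φs := fun _ => rfl
  set R : ℝ := rs * Real.exp (φs / Z) with hRdef
  set A : ℝ → ℝ := fun t => t * a + (1 - t) * R with hAdef
  set E : ℝ → ℝ := fun t => Real.exp (-φ t / Z) with hEdef
  set P : ℝ → ℝ := fun t => (a - R) + A t * φs / Z with hPdef
  set ρ' : ℝ → ℝ := fun t => P t * E t with hρ'def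
  set γ' : ℝ → ℝ × ℝ := fun t =>
    (ρ' t * Real.cos (φ t) + ρ t * φs * Real.sin (φ t),
     ρ' t * Real.sin (φ t) - ρ t * φs * Real.cos (φ t)) with hγ'def
  have hρAE : ∀ t, ρ t = A t * E t := fun _ => rfl
  have hγeq : ∀ t, γ t = (ρ t * Real.cos (φ t), ρ t * Real.sin (φ t)) := fun _ => rfl
  have hAt : ∀ t, A t = t * a + (1 - t) * R := fun _ => rfl
  have hEt : ∀ t, E t = Real.exp (-φ t / Z) := fun _ => rfl
  have hPt : ∀ t, P t = (a - R) + A t * φs / Z := fun _ => rfl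
  have hρ't : ∀ t, ρ' t = P t * E t := fun _ => rfl
  have hγ't : ∀ t, γ' t =
      (ρ' t * Real.cos (φ t) + ρ t * φs * Real.sin (φ t),
       ρ' t * Real.sin (φ t) - ρ t * φs * Real.cos (φ t)) := fun _ => rfl
  have hR0 : 0 < R := mul_pos hrs (Real.exp_pos _)
  have haR : R < a := by rw [hRdef]; exact hra
  have ha0 : 0 < a := hR0.trans haR
  have hE0 : ∀ t, 0 < E t := fun t => by rw [hEt]; exact Real.exp_pos _
  -- derivatives
  have hφd : ∀ t, HasDerivAt φ (-φs) t := by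
    intro t
    have h : HasDerivAt (fun t : ℝ => (1 - t) * φs) ((0 - 1) * φs) t :=
      ((hasDerivAt_const t (1:ℝ)).sub (hasDerivAt_id t)).mul_const φs
    have h2 : HasDerivAt φ ((0 - 1) * φs) t := h
    simpa using h2
  have hAd : ∀ t, HasDerivAt A (a - R) t := by
    intro t
    have h : HasDerivAt (fun t : ℝ => t * a + (1 - t) * R) (1 * a + (0 - 1) * R) t :=
      ((hasDerivAt_id t).mul_const a).add
        (((hasDerivAt_const t (1:ℝ)).sub (hasDerivAt_id t)).mul_const R)
    have h2 : HasDerivAt A (1 * a + (0 - 1) * R) t := h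
    have he : (1 : ℝ) * a + (0 - 1) * R = a - R := by ring
    rwa [he] at h2
  have hEd : ∀ t, HasDerivAt E (E t * (φs / Z)) t := by
    intro t
    have h1 : HasDerivAt (fun t => -φ t / Z) (-(-φs) / Z) t := ((hφd t).neg).div_const Z
    have h2 : HasDerivAt (fun t => Real.exp (-φ t / Z))
        (Real.exp (-φ t / Z) * (-(-φs) / Z)) t := h1.exp
    have h3 : HasDerivAt E (Real.exp (-φ t / Z) * (-(-φs) / Z)) t := h2
    have he : Real.exp (-φ t / Z) * (-(-φs) / Z) = E t * (φs / Z) := by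
      rw [hEt]; ring
    rwa [he] at h3
  have hρd : ∀ t, HasDerivAt ρ (ρ' t) t := by
    intro t
    have h : HasDerivAt (fun t => A t * E t) ((a - R) * E t + A t * (E t * (φs / Z))) t :=
      (hAd t).mul (hEd t)
    have h2 : HasDerivAt ρ ((a - R) * E t + A t * (E t * (φs / Z))) t := h
    have he : (a - R) * E t + A t * (E t * (φs / Z)) = ρ' t := by
      rw [hρ't, hPt]; field_simp
    rwa [he] at h2
  have hγd : ∀ t, HasDerivAt γ (γ' t) t := by
    intro t
    have hc : HasDerivAt (fun t => Real.cos (φ t)) (-Real.sin (φ t) * (-φs)) t := (hφd t).cos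
    have hs : HasDerivAt (fun t => Real.sin (φ t)) (Real.cos (φ t) * (-φs)) t := (hφd t).sin
    have h1 : HasDerivAt (fun t => ρ t * Real.cos (φ t))
        (ρ' t * Real.cos (φ t) + ρ t * (-Real.sin (φ t) * (-φs))) t := (hρd t).mul hc
    have h2 : HasDerivAt (fun t => ρ t * Real.sin (φ t))
        (ρ' t * Real.sin (φ t) + ρ t * (Real.cos (φ t) * (-φs))) t := (hρd t).mul hs
    have h : HasDerivAt γ (ρ' t * Real.cos (φ t) + ρ t * (-Real.sin (φ t) * (-φs)),
        ρ' t * Real.sin (φ t) + ρ t * (Real.cos (φ t) * (-φs))) t := h1.prodMk h2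
    have he : (ρ' t * Real.cos (φ t) + ρ t * (-Real.sin (φ t) * (-φs)),
        ρ' t * Real.sin (φ t) + ρ t * (Real.cos (φ t) * (-φs))) = γ' t := by
      rw [hγ't, Prod.mk.injEq]
      constructor <;> ring
    rwa [he] at h
  -- endpoints
  have hexp : Real.exp (φs / Z) * Real.exp (-(φs / Z)) = 1 := by
    rw [← Real.exp_add]; simp
  have hγ0 : γ 0 = (rs * Real.cos φs, rs * Real.sin φs) := by
    have hρ0eq : ρ 0 = rs := by
      rw [hρAE, hAt, hEt, hφ]
      have h1 : -((1 - (0:ℝ)) * φs) / Z = -(φs / Z) := by ring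
      rw [h1]
      have h2 : (0:ℝ) * a + (1 - 0) * R = R := by ring
      rw [h2, hRdef]
      linear_combination rs * hexp
    have hφ0eq : φ 0 = φs := by rw [hφ]; ring
    rw [hγeq, hρ0eq, hφ0eq]
  have hγ1 : γ 1 = (a, 0) := by
    have hφ1eq : φ 1 = 0 := by rw [hφ]; ring
    have hρ1eq : ρ 1 = a := by
      rw [hρAE, hAt, hEt, hφ1eq]
      norm_num
    rw [hγeq, hρ1eq, hφ1eq]
    simp
  -- continuity
  have hφc : Continuous φ := by
    have he : φ = fun t => (1 - t) * φs := funext hφ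
    rw [he]; continuity
  have hAc : Continuous A := by
    have he : A = fun t => t * a + (1 - t) * R := funext hAt
    rw [he]; continuity
  have hEc : Continuous E := by
    have he : E = fun t => Real.exp (-φ t / Z) := funext hEt
    rw [he]; exact Real.continuous_exp.comp ((hφc.neg).div_const Z)
  have hρc : Continuous ρ := by
    have he : ρ = fun t => A t * E t := funext hρAE
    rw [he]; exact hAc.mul hEc
  have hPc : Continuous P := by
    have he : P = fun t => (a - R) + A t * φs / Z := funext hPt
    rw [he]; exact continuous_const.add ((hAc.mul continuous_const).div_const Z)
  have hρ'c : Continuous ρ' := by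
    have he : ρ' = fun t => P t * E t := funext hρ't
    rw [he]; exact hPc.mul hEc
  have hγ'c : Continuous γ' := by
    have he : γ' = fun t =>
        (ρ' t * Real.cos (φ t) + ρ t * φs * Real.sin (φ t),
         ρ' t * Real.sin (φ t) - ρ t * φs * Real.cos (φ t)) := funext hγ't
    rw [he]
    refine Continuous.prodMk ?_ ?_
    · exact (hρ'c.mul (Real.continuous_cos.comp hφc)).add
        ((hρc.mul continuous_const).mul (Real.continuous_sin.comp hφc))
    · exact (hρ'c.mul (Real.continuous_sin.comp hφc)).sub
        ((hρc.mul continuous_const).mul (Real.continuous_cos.comp hφc))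
  clear_value Z φ ρ γ R A E P ρ' γ'
  clear hRdef hAdef hEdef hPdef hρ'def hγ'def
  -- pointwise facts on [0,1]
  have key : ∀ t ∈ Icc (0:ℝ) 1, γ t ∈ NY ε ∧ gY ζ (γ t) (γ' t) < 0 ∧
      0 < dot2 (γ t) (γ' t) := by
    intro t ht
    obtain ⟨ht0, ht1⟩ := ht
    have hsc := Real.sin_sq_add_cos_sq (φ t)
    have hA0 : 0 < A t := by
      rw [hAt]
      nlinarith [mul_nonneg ht0 (sub_nonneg.mpr haR.le)]
    have hAa : A t ≤ a := by
      rw [hAt]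
      nlinarith [mul_nonneg (by linarith : (0:ℝ) ≤ 1 - t) (sub_nonneg.mpr haR.le)]
    have hφt0 : 0 ≤ φ t := by
      rw [hφ]; exact mul_nonneg (by linarith) hφ0.le
    have hEle1 : E t ≤ 1 := by
      rw [hEt]
      have h1 : -φ t / Z ≤ 0 := div_nonpos_of_nonpos_of_nonneg (by linarith) hZ.le
      calc Real.exp (-φ t / Z) ≤ Real.exp 0 := Real.exp_le_exp.mpr h1
        _ = 1 := Real.exp_zero
    have hρ0 : 0 < ρ t := by rw [hρAE]; exact mul_pos hA0 (hE0 t)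
    have hρa : ρ t ≤ a := by
      rw [hρAE]
      calc A t * E t ≤ a * 1 := mul_le_mul hAa hEle1 (hE0 t).le ha0.le
        _ = a := mul_one a
    have hP0 : 0 < P t := by
      rw [hPt]
      have h1 : 0 < A t * φs / Z := div_pos (mul_pos hA0 hφ0) hZ
      linarith
    have hρ'0 : 0 < ρ' t := by rw [hρ't]; exact mul_pos hP0 (hE0 t)
    have hdot : dot2 (γ t) (γ' t) = ρ t * ρ' t := by
      rw [hγeq, hγ't]
      simp only [dot2]
      linear_combination (ρ t * ρ' t) * hsc
    have hnorm : dot2 (γ' t) (γ' t) = ρ' t ^ 2 + (ρ t * φs) ^ 2 := by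
      rw [hγ't]
      simp only [dot2]
      linear_combination (ρ' t ^ 2 + (ρ t * φs) ^ 2) * hsc
    have hgg : dot2 (γ t) (γ t) = ρ t ^ 2 := by
      rw [hγeq]
      simp only [dot2]
      linear_combination (ρ t ^ 2) * hsc
    have hsq12 : (γ t).1 ^ 2 + (γ t).2 ^ 2 = ρ t ^ 2 := by
      rw [hγeq]; linear_combination (ρ t ^ 2) * hsc
    refine ⟨?_, ?_, ?_⟩
    · simp only [NY, Set.mem_setOf_eq, hsq12]
      constructor
      · positivity
      · nlinarith
    · have hkey : Z * ρ' t - ρ t * φs = Z * (a - R) * E t := by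
        rw [hρAE, hρ't, hPt]
        field_simp
        ring
      have hkey2 : ρ t * φs < Z * ρ' t := by
        nlinarith [mul_pos (mul_pos hZ (sub_pos.mpr haR)) (hE0 t)]
      have hsq : (ρ t * φs) ^ 2 < Z ^ 2 * ρ' t ^ 2 := by
        nlinarith [mul_pos hρ0 hφ0, mul_pos hZ hρ'0]
      have hgval : gY ζ (γ t) (γ' t) =
          4 * ρ t ^ 2 * (ρ' t ^ 2 + (ρ t * φs) ^ 2) - 4 * ζ * (ρ t * ρ' t) ^ 2 := by
        simp only [gY]
        rw [hgg, hnorm, hdot]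
      rw [hgval]
      have hζZ : ζ = Z ^ 2 + 1 := by linarith
      rw [hζZ]
      nlinarith [mul_pos (pow_pos hρ0 2)
        (by linarith : (0:ℝ) < Z ^ 2 * ρ' t ^ 2 - (ρ t * φs) ^ 2)]
    · rw [hdot]; exact mul_pos hρ0 hρ'0
  refine ⟨fun t ht => (key t ht).1, hγ0, hγ1, ?_, ?_⟩
  · intro t ht
    have hd := hγd t
    refine ⟨hd.differentiableAt, ?_, ?_⟩
    · rw [hd.deriv]; exact (key t ht).2.1
    · rw [hd.deriv]; exact (key t ht).2.2
  · exact ⟨γ, γ', ⟨fun t _ => hγd t, hγ'c.continuousOn,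
      fun t ht => (key t ht).1, fun t ht => (key t ht).2.1, fun t ht => (key t ht).2.2⟩,
      hγ0, hγ1⟩
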